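/- Let G be a finite simple graph and let k and d be positive integers. For each v ∈ V(G), let H_v be the subgraph of G induced by the set of vertices at distance at most d from v in G, and let ℋ = {H_v}_{v∈V(G)}. Then the graphs G^{k+2d} and (G^k)°[ℋ] are isomorphic; in fact, the identity map on V(G) (identifying v with the index of H_v) is an isomorphism: for all distinct u,v ∈ V(G), u and v are adjacent in G^{k+2d} if and only if u and v are adjacent in (G^k)°[ℋ]. -/

import Mathlib

open SimpleGraph

namespace Paper

/-- A tree decomposition of a graph `G`. -/
structure TreeDecomp {V : Type} (G : SimpleGraph V) where
  ι : Type
  fin : Fintype ι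
  tree : SimpleGraph ι
  isTree : tree.IsTree
  bag : ι → Set V
  mem_bag : ∀ v : V, ∃ t, v ∈ bag t
  edge_bag : ∀ ⦃u w : V⦄, G.Adj u w → ∃ t, u ∈ bag t ∧ w ∈ bag t
  coherent : ∀ v : V, (tree.induce {t | v ∈ bag t}).Connected

/-- `M` is an induced matching in `G`: a set of edges, pairwise disjoint,
with no edge of `G` joining endpoints of distinct edges of `M`. -/
def IsInducedMatching {V : Type} (G : SimpleGraph V) (M : Finset (V × V)) : Prop :=
  (∀ p ∈ M, G.Adj p.1 p.2) ∧
    ∀ p ∈ M, ∀ q ∈ M, p ≠ q →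
      (p.1 ≠ q.1 ∧ p.1 ≠ q.2 ∧ p.2 ≠ q.1 ∧ p.2 ≠ q.2) ∧
      (¬ G.Adj p.1 q.1 ∧ ¬ G.Adj p.1 q.2 ∧ ¬ G.Adj p.2 q.1 ∧ ¬ G.Adj p.2 q.2)

/-- Every edge of `M` has an endpoint in `X`. -/
def Touches {V : Type} (M : Finset (V × V)) (X : Set V) : Prop :=
  ∀ p ∈ M, p.1 ∈ X ∨ p.2 ∈ X

/-- μ(𝒯): the maximum size of an induced matching of `G` all of whose edges
touch a common bag of the tree decomposition `D`. -/
noncomputable def mu {V : Type} (G : SimpleGraph V) (D : TreeDecomp G) : ℕ :=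
  sSup {n | ∃ (t : D.ι) (M : Finset (V × V)),
    IsInducedMatching G M ∧ Touches M (D.bag t) ∧ M.card = n}

/-- Induced matching treewidth: minimum of μ(𝒯) over tree decompositions. -/
noncomputable def treeMu {V : Type} (G : SimpleGraph V) : ℕ :=
  sInf {n | ∃ D : TreeDecomp G, mu G D = n}

/-- `S` is an independent set of `G`. -/
def IsIndepSet {V : Type} (G : SimpleGraph V) (S : Finset V) : Prop :=
  ∀ u ∈ S, ∀ v ∈ S, u ≠ v → ¬ G.Adj u v

/-- α(𝒯): the maximum size of an independent set of `G` contained in a bag. -/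
noncomputable def alphaTD {V : Type} (G : SimpleGraph V) (D : TreeDecomp G) : ℕ :=
  sSup {n | ∃ (t : D.ι) (S : Finset V),
    IsIndepSet G S ∧ ↑S ⊆ D.bag t ∧ S.card = n}

/-- Tree-independence number: minimum of α(𝒯) over tree decompositions. -/
noncomputable def treeAlpha {V : Type} (G : SimpleGraph V) : ℕ :=
  sInf {n | ∃ D : TreeDecomp G, alphaTD G D = n}

/-- The `k`-th power of `G`: distinct vertices adjacent iff their distance in `G`
is at most `k` (for `k = 0` this is the edgeless graph). -/
def power {V : Type} (G : SimpleGraph V) (k : ℕ) : SimpleGraph V :=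
  SimpleGraph.fromRel (fun u v => G.Reachable u v ∧ G.dist u v ≤ k)

/-- The graph `G°[ℋ]` for a family `ℋ = {H j}` of subgraphs of `G`: vertices are
indices `j`, two distinct indices adjacent iff the subgraphs share a vertex or
there is an edge of `G` between them. -/
def blowup {V J : Type} (G : SimpleGraph V) (H : J → G.Subgraph) : SimpleGraph J :=
  SimpleGraph.fromRel (fun i j =>
    ((H i).verts ∩ (H j).verts).Nonempty ∨
      ∃ u ∈ (H i).verts, ∃ v ∈ (H j).verts, G.Adj u v)



private lemma tri' {V : Type} {G : SimpleGraph V} {u v w : V} (h1 : G.Reachable u v)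
    (h2 : G.Reachable v w) : G.dist u w ≤ G.dist u v + G.dist v w := by
  obtain ⟨p, hp⟩ := h1.exists_walk_length_eq_dist
  obtain ⟨q, hq⟩ := h2.exists_walk_length_eq_dist
  rw [← hp, ← hq, ← Walk.length_append]
  exact dist_le _

private lemma seg' {V : Type} {G : SimpleGraph V} :
    ∀ {u v : V} (p : G.Walk u v) (i j : ℕ), i ≤ j →
      ∃ q : G.Walk (p.getVert i) (p.getVert j), q.length ≤ j - i := by
  intro u v p
  induction p with
  | nil => intro i j _; exact ⟨Walk.nil, by simp⟩
  | cons h q ih =>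
    intro i j hij
    match i, j with
    | 0, 0 => exact ⟨Walk.nil, by simp⟩
    | 0, j + 1 =>
      obtain ⟨r, hr⟩ := ih 0 j (Nat.zero_le _)
      refine ⟨Walk.cons h (r.copy (Walk.getVert_zero q) rfl), ?_⟩
      exact le_trans (by simp only [Walk.length_cons, Walk.length_copy]; omega :
        (Walk.cons h (r.copy (Walk.getVert_zero q) rfl)).length ≤ j + 1) (by omega)
    | i + 1, j + 1 =>
      obtain ⟨r, hr⟩ := ih i j (by omega)
      exact ⟨r, by simpa using hr⟩

private lemma dist_getVert' {V : Type} {G : SimpleGraph V} {u v : V} (p : G.Walk u v) {i j : ℕ}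
    (hij : i ≤ j) :
    G.dist (p.getVert i) (p.getVert j) ≤ j - i ∧ G.Reachable (p.getVert i) (p.getVert j) := by
  obtain ⟨q, hq⟩ := seg' p i j hij
  exact ⟨le_trans (dist_le q) hq, ⟨q⟩⟩

private lemma fwd' {V : Type} {G : SimpleGraph V} {k d : ℕ} {u v : V}
    (hr : G.Reachable u v) (hle : G.dist u v ≤ k + 2 * d) :
    ({x | G.Reachable u x ∧ G.dist u x ≤ d} ∩ {x | G.Reachable v x ∧ G.dist v x ≤ d}).Nonempty ∨
      ∃ a, (G.Reachable u a ∧ G.dist u a ≤ d) ∧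
        ∃ b, (G.Reachable v b ∧ G.dist v b ≤ d) ∧ a ≠ b ∧
          (G.Reachable a b ∧ G.dist a b ≤ k ∨ G.Reachable b a ∧ G.dist b a ≤ k) := by
  obtain ⟨p, hp⟩ := hr.exists_walk_length_eq_dist
  by_cases hL : G.dist u v ≤ d
  · exact Or.inl ⟨v, ⟨hr, hL⟩, ⟨Reachable.refl v, by simp [dist_self]⟩⟩
  by_cases hL2 : G.dist u v ≤ 2 * d
  · left
    have h1 := dist_getVert' p (Nat.zero_le d)
    rw [Walk.getVert_zero] at h1
    have h2 := dist_getVert' p (show d ≤ p.length by omega)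
    rw [Walk.getVert_length] at h2
    refine ⟨p.getVert d, ⟨h1.2, ?_⟩, ⟨h2.2.symm, ?_⟩⟩
    · have := h1.1; omega
    · rw [dist_comm]; have := h2.1; omega
  · right
    have h1 := dist_getVert' p (Nat.zero_le d)
    rw [Walk.getVert_zero] at h1
    have h2 := dist_getVert' p (show d ≤ p.length - d by omega)
    have h3 := dist_getVert' p (Nat.sub_le p.length d)
    rw [Walk.getVert_length] at h3
    refine ⟨p.getVert d, ⟨h1.2, by have := h1.1; omega⟩,
      p.getVert (p.length - d), ⟨h3.2.symm, by rw [dist_comm]; have := h3.1; omega⟩, ?_,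
      Or.inl ⟨h2.2, by have := h2.1; omega⟩⟩
    intro hab
    rw [← hab] at h3
    have := tri' h1.2 h3.2
    have := h1.1
    have := h3.1
    omega

private lemma bwd' {V : Type} {G : SimpleGraph V} {k d : ℕ} {u v : V}
    (h : ({x | G.Reachable u x ∧ G.dist u x ≤ d} ∩
            {x | G.Reachable v x ∧ G.dist v x ≤ d}).Nonempty ∨
      ∃ a, (G.Reachable u a ∧ G.dist u a ≤ d) ∧
        ∃ b, (G.Reachable v b ∧ G.dist v b ≤ d) ∧ a ≠ b ∧
          (G.Reachable a b ∧ G.dist a b ≤ k ∨ G.Reachable b a ∧ G.dist b a ≤ k)) :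
    G.Reachable u v ∧ G.dist u v ≤ k + 2 * d := by
  rcases h with ⟨m, ⟨humr, hum⟩, ⟨hvmr, hvm⟩⟩ | ⟨a, ⟨huar, hua⟩, b, ⟨hvbr, hvb⟩, _, hpow⟩
  · refine ⟨humr.trans hvmr.symm, ?_⟩
    have t := tri' humr hvmr.symm
    have hc : G.dist m v = G.dist v m := dist_comm
    omega
  · have habr : G.Reachable a b := by
      rcases hpow with ⟨h, _⟩ | ⟨h, _⟩
      exacts [h, h.symm]
    have hab : G.dist a b ≤ k := by
      rcases hpow with ⟨_, h⟩ | ⟨_, h⟩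
      · exact h
      · rw [dist_comm]; exact h
    refine ⟨huar.trans (habr.trans hvbr.symm), ?_⟩
    have t1 := tri' huar (habr.trans hvbr.symm)
    have t2 := tri' habr hvbr.symm
    have hc : G.dist b v = G.dist v b := dist_comm
    omega

/-- with `H v` the subgraph induced by the ball of radius `d`
around `v`, the graphs `G^(k+2d)` and `(G^k)°[ℋ]` coincide (the identity on
`V(G)` is an isomorphism). -/
theorem stmt2 {V : Type} [Fintype V] (G : SimpleGraph V) (k d : ℕ)
    (hk : 0 < k) (hd : 0 < d) :
    power G (k + 2 * d) =
      blowup (power G k)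
        (fun v => (⊤ : (power G k).Subgraph).induce
          {u | G.Reachable v u ∧ G.dist v u ≤ d}) := by
  ext u v
  simp only [power, blowup, fromRel_adj, Subgraph.induce_verts, Set.mem_setOf_eq]
  refine and_congr_right fun hne => ?_
  constructor
  · rintro (⟨hr, hle⟩ | ⟨hr, hle⟩)
    · exact Or.inl (fwd' hr hle)
    · exact Or.inr (fwd' hr hle)
  · rintro (h | h)
    · exact Or.inl (bwd' h)
    · exact Or.inr (bwd' h)

end Paper
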